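/- Let T = Trian(A, M, B) be a triangular algebra over R. If d is a derivation of T which is centralizing, i.e. d(x)x − xd(x) ∈ Z(T) for all x ∈ T, then d = 0. -/

import Mathlib

/-!
Triangular algebras `Trian(A, M, B)` realized on the type `A × M × B`, where `A`, `B` are
unital associative `R`-algebras and `M` is an `(A, B)`-bimodule (a left `A`-module and a
right `B`-module, the right action being encoded as a left `Bᵐᵒᵖ`-action, written
`op b • m`, with the two actions commuting), compatible with the `R`-module structure.
-/

set_option linter.unusedSectionVars false

open MulOpposite

variable {R A B M : Type*} [CommRing R] [Ring A] [Ring B]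
  [Algebra R A] [Algebra R B]
  [AddCommGroup M] [Module R M]
  [Module A M] [Module Bᵐᵒᵖ M]
  [SMulCommClass A Bᵐᵒᵖ M]
  [IsScalarTower R A M] [SMulCommClass R A M]
  [IsScalarTower R Bᵐᵒᵖ M] [SMulCommClass R Bᵐᵒᵖ M]

/-- Multiplication of the triangular algebra `Trian(A, M, B)`:
`(a, m, b) * (a', m', b') = (a * a', a • m' + m • b', b * b')`, where the right action of
`B` on `M` is written `op b • m`. -/
instance triMul : Mul (A × M × B) :=
  ⟨fun x y => (x.1 * y.1, x.1 • y.2.1 + op y.2.2 • x.2.1, x.2.2 * y.2.2)⟩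

theorem tri_mul_def (x y : A × M × B) :
    x * y = (x.1 * y.1, x.1 • y.2.1 + op y.2.2 • x.2.1, x.2.2 * y.2.2) := rfl

instance triOne : One (A × M × B) := ⟨(1, 0, 1)⟩

theorem tri_one_def : (1 : A × M × B) = (1, 0, 1) := rfl

/-- The triangular algebra `Trian(A, M, B)` as a ring structure on `A × M × B`. -/
instance triRing : Ring (A × M × B) where
  __ := (inferInstance : AddCommGroup (A × M × B))
  __ := triMul
  __ := triOne
  left_distrib x y z := by
    refine Prod.ext ?_ (Prod.ext ?_ ?_) <;>
      simp [tri_mul_def, mul_add, smul_add, add_smul, Prod.fst_add, Prod.snd_add] <;> abel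
  right_distrib x y z := by
    refine Prod.ext ?_ (Prod.ext ?_ ?_) <;>
      simp [tri_mul_def, add_mul, smul_add, add_smul, Prod.fst_add, Prod.snd_add] <;> abel
  zero_mul x := by
    refine Prod.ext ?_ (Prod.ext ?_ ?_) <;> simp [tri_mul_def]
  mul_zero x := by
    refine Prod.ext ?_ (Prod.ext ?_ ?_) <;> simp [tri_mul_def]
  mul_assoc x y z := by
    refine Prod.ext (mul_assoc _ _ _) (Prod.ext ?_ (mul_assoc _ _ _))
    show (x.1 * y.1) • z.2.1 + op z.2.2 • (x.1 • y.2.1 + op y.2.2 • x.2.1)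
        = x.1 • (y.1 • z.2.1 + op z.2.2 • y.2.1) + op (y.2.2 * z.2.2) • x.2.1
    rw [mul_smul, smul_add, smul_add, op_mul, mul_smul, smul_comm x.1 (op z.2.2)]
    abel
  one_mul x := by
    refine Prod.ext (one_mul _) (Prod.ext ?_ (one_mul _))
    show (1 : A) • x.2.1 + op x.2.2 • (0 : M) = x.2.1
    simp
  mul_one x := by
    refine Prod.ext (mul_one _) (Prod.ext ?_ (mul_one _))
    show x.1 • (0 : M) + op (1 : B) • x.2.1 = x.2.1
    simp

/-- The triangular algebra `Trian(A, M, B)` as an `R`-algebra. -/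
instance triAlgebra : Algebra R (A × M × B) :=
  Algebra.ofModule
    (fun r x y => by
      refine Prod.ext ?_ (Prod.ext ?_ ?_)
      · exact smul_mul_assoc r x.1 y.1
      · show (r • x.1) • y.2.1 + op y.2.2 • (r • x.2.1) = r • (x.1 • y.2.1 + op y.2.2 • x.2.1)
        rw [smul_assoc, smul_add, smul_comm (op y.2.2) r]
      · exact smul_mul_assoc r x.2.2 y.2.2)
    (fun r x y => by
      refine Prod.ext ?_ (Prod.ext ?_ ?_)
      · exact mul_smul_comm r x.1 y.1
      · show x.1 • (r • y.2.1) + op (r • y.2.2) • x.2.1 = r • (x.1 • y.2.1 + op y.2.2 • x.2.1)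
        rw [op_smul, smul_assoc, smul_add, smul_comm x.1 r]
      · exact mul_smul_comm r x.2.2 y.2.2)

/-- A centralizing derivation of a triangular algebra is zero. -/
theorem centralizing_derivation_eq_zero
    [Nontrivial M] [FaithfulSMul A M] [FaithfulSMul Bᵐᵒᵖ M]
    (d : (A × M × B) →ₗ[R] (A × M × B))
    (hd : ∀ x y : A × M × B, d (x * y) = d x * y + x * d y)
    (hc : ∀ x y : A × M × B, (d x * x - x * d x) * y = y * (d x * x - x * d x)) :
    d = 0 := by
  set e : A × M × B := (1, 0, 0) with he
  set f : A × M × B := (0, 0, 1) with hf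
  -- d 1 = 0
  have hd1 : d 1 = 0 := by
    have h := hd 1 1
    simp only [one_mul, mul_one] at h
    exact (left_eq_add.mp h)
  -- d e = 0
  have hee : e * e = e := by
    refine Prod.ext ?_ (Prod.ext ?_ ?_) <;> simp [tri_mul_def, he]
  have h1 : d e = d e * e + e * d e := by
    have h := hd e e; rwa [hee] at h
  have hp : (d e).1 = 0 := by
    have h := congrArg Prod.fst h1
    simpa [tri_mul_def, he, Prod.fst_add] using h
  have hr : (d e).2.2 = 0 := by
    have h := congrArg (fun z : A × M × B => z.2.2) h1
    simpa [tri_mul_def, he, Prod.snd_add] using h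
  have hq : (d e).2.1 = 0 := by
    have h := congrArg (fun z : A × M × B => z.2.1) (hc e e)
    simpa [tri_mul_def, he, Prod.snd_add, Prod.snd_sub, Prod.fst_sub] using h
  have hde : d e = 0 := Prod.ext hp (Prod.ext hq hr)
  -- d f = 0
  have hfe : f = 1 - e := by
    refine Prod.ext ?_ (Prod.ext ?_ ?_) <;> simp [he, hf, tri_one_def]
  have hdf : d f = 0 := by rw [hfe, map_sub, hd1, hde, sub_zero]
  -- d vanishes on the M-corner
  have hdM : ∀ m : M, d (0, m, 0) = 0 := by
    intro m
    set x : A × M × B := (0, m, 0) with hx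
    have hex : e * x = x := by
      refine Prod.ext ?_ (Prod.ext ?_ ?_) <;> simp [tri_mul_def, he, hx]
    have hxf : x * f = x := by
      refine Prod.ext ?_ (Prod.ext ?_ ?_) <;> simp [tri_mul_def, hf, hx]
    have h2 : d x = e * d x := by
      have h := hd e x; rwa [hex, hde, zero_mul, zero_add] at h
    have h3 : d x = d x * f := by
      have h := hd x f; rwa [hxf, hdf, mul_zero, add_zero] at h
    have hb : (d x).2.2 = 0 := by
      have h := congrArg (fun z : A × M × B => z.2.2) h2
      simpa [tri_mul_def, he] using h
    have ha : (d x).1 = 0 := by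
      have h := congrArg Prod.fst h3
      simpa [tri_mul_def, hf] using h
    have hx' : d (e + x) = d x := by rw [map_add, hde, zero_add]
    have hcc := hc (e + x) e
    rw [hx'] at hcc
    have hm : (d x).2.1 = 0 := by
      have h := congrArg (fun z : A × M × B => z.2.1) hcc
      rw [hx] at ha hb
      simpa [tri_mul_def, he, hx, ha, hb, Prod.fst_add, Prod.snd_add,
        Prod.fst_sub, Prod.snd_sub] using h
    exact Prod.ext ha (Prod.ext hm hb)
  -- d vanishes on the A-corner
  have hdA : ∀ a : A, d (a, 0, 0) = 0 := by
    intro a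
    set x : A × M × B := (a, 0, 0) with hx
    have hex : e * x = x := by
      refine Prod.ext ?_ (Prod.ext ?_ ?_) <;> simp [tri_mul_def, he, hx]
    have hxe : x * e = x := by
      refine Prod.ext ?_ (Prod.ext ?_ ?_) <;> simp [tri_mul_def, he, hx]
    have h2 : d x = e * d x := by
      have h := hd e x; rwa [hex, hde, zero_mul, zero_add] at h
    have h3 : d x = d x * e := by
      have h := hd x e; rwa [hxe, hde, mul_zero, add_zero] at h
    have hb : (d x).2.2 = 0 := by
      have h := congrArg (fun z : A × M × B => z.2.2) h2
      simpa [tri_mul_def, he] using h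
    have hm : (d x).2.1 = 0 := by
      have h := congrArg (fun z : A × M × B => z.2.1) h3
      simpa [tri_mul_def, he] using h
    have ha : (d x).1 = 0 := by
      refine eq_of_smul_eq_smul (M := A) (α := M) fun m => ?_
      have h := hd x (0, m, 0)
      have hxm : x * ((0, m, 0) : A × M × B) = (0, a • m, 0) := by
        refine Prod.ext ?_ (Prod.ext ?_ ?_) <;> simp [tri_mul_def, hx]
      rw [hxm, hdM, hdM, mul_zero, add_zero] at h
      have h' := congrArg (fun z : A × M × B => z.2.1) h.symm
      simpa [tri_mul_def, hx] using h'
    exact Prod.ext ha (Prod.ext hm hb)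
  -- d vanishes on the B-corner
  have hdB : ∀ b : B, d (0, 0, b) = 0 := by
    intro b
    set x : A × M × B := (0, 0, b) with hx
    have hfx : f * x = x := by
      refine Prod.ext ?_ (Prod.ext ?_ ?_) <;> simp [tri_mul_def, hf, hx]
    have h2 : d x = f * d x := by
      have h := hd f x; rwa [hfx, hdf, zero_mul, zero_add] at h
    have ha : (d x).1 = 0 := by
      have h := congrArg Prod.fst h2
      simpa [tri_mul_def, hf] using h
    have hm : (d x).2.1 = 0 := by
      have h := congrArg (fun z : A × M × B => z.2.1) h2
      simpa [tri_mul_def, hf] using h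
    have hb : (d x).2.2 = 0 := by
      have hop : op (d x).2.2 = (0 : Bᵐᵒᵖ) := by
        refine eq_of_smul_eq_smul (M := Bᵐᵒᵖ) (α := M) fun m => ?_
        have h := hd (0, m, 0) x
        have hmx : ((0, m, 0) : A × M × B) * x = (0, op b • m, 0) := by
          refine Prod.ext ?_ (Prod.ext ?_ ?_) <;> simp [tri_mul_def, hx]
        rw [hmx, hdM, hdM, zero_mul, zero_add] at h
        have h' := congrArg (fun z : A × M × B => z.2.1) h.symm
        simpa [tri_mul_def, hx] using h'
      simpa using hop
    exact Prod.ext ha (Prod.ext hm hb)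
  -- conclude
  refine LinearMap.ext fun x => ?_
  have hsplit : x = (x.1, 0, 0) + ((0, x.2.1, 0) + ((0, 0, x.2.2) : A × M × B)) := by
    refine Prod.ext ?_ (Prod.ext ?_ ?_) <;> simp
  rw [hsplit, map_add, map_add, hdA, hdM, hdB]
  simp
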